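/- For every order k with 1 ≤ k ≤ n and every l with 0 ≤ l ≤ n−k, the B-spline B_{l,k} is (k−1)-times continuously differentiable on ℝ, i.e. B_{l,k} is of class C^{k−1} on all of ℝ. -/

import Mathlib

/-- The B-splines over knots `ξ`, defined recursively: `Bspline ξ l 0` is the
indicator of the half-open interval `(ξ l, ξ (l+1)]`, and for order `j+1`,
`B_{l,j+1}(x) = ((x − ξ_l)/(ξ_{l+j+1} − ξ_l))·B_{l,j}(x)
             + ((ξ_{l+j+2} − x)/(ξ_{l+j+2} − ξ_{l+1}))·B_{l+1,j}(x)`. -/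
noncomputable def Bspline (ξ : ℕ → ℝ) : ℕ → ℕ → ℝ → ℝ
  | l, 0, x => Set.indicator (Set.Ioc (ξ l) (ξ (l + 1))) (fun _ => 1) x
  | l, j + 1, x =>
      ((x - ξ l) / (ξ (l + j + 1) - ξ l)) * Bspline ξ l j x +
      ((ξ (l + j + 2) - x) / (ξ (l + j + 2) - ξ (l + 1))) * Bspline ξ (l + 1) j x


noncomputable def tpow (c x : ℝ) : ℝ := max (c - x) 0

lemma tpow_continuous (c : ℝ) : Continuous (tpow c) :=
  (continuous_const.sub continuous_id).max continuous_const

lemma tpow_nonpos (c x : ℝ) (h : c ≤ x) : tpow c x = 0 := by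
  simp [tpow, max_eq_right, sub_nonpos.mpr h]

lemma tpow_of_le (c x : ℝ) (h : x ≤ c) : tpow c x = c - x := by
  simp [tpow, max_eq_left, sub_nonneg.mpr h]

lemma tpow_mul (c x : ℝ) : tpow c x * (c - x) = tpow c x ^ 2 := by
  rcases le_total x c with h | h
  · rw [tpow_of_le c x h]; ring
  · rw [tpow_nonpos c x h]; ring

-- derivative of y ↦ (max y 0)^2 is 2 * max y 0
lemma sq_pos_hasDeriv (y : ℝ) : HasDerivAt (fun y : ℝ => max y 0 ^ 2) (2 * max y 0) y := by
  rcases lt_trichotomy y 0 with h | h | h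
  · have : (fun y : ℝ => max y 0 ^ 2) =ᶠ[nhds y] fun _ => 0 := by
      filter_upwards [Iio_mem_nhds h] with z hz
      simp [max_eq_right (le_of_lt (Set.mem_Iio.mp hz))]
    rw [max_eq_right h.le, mul_zero]
    exact (hasDerivAt_const y (0 : ℝ)).congr_of_eventuallyEq this
  · subst h
    rw [max_self, mul_zero]
    rw [hasDerivAt_iff_isLittleO]
    have h1 : (fun z : ℝ => max z 0 ^ 2) =o[nhds 0] fun z => z := by
      have hb : (fun z : ℝ => max z 0) =O[nhds 0] fun z => z := by
        rw [Asymptotics.isBigO_iff]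
        refine ⟨1, ?_⟩
        filter_upwards with z
        rcases le_total z 0 with h | h
        · simp [max_eq_right h, abs_nonneg]
        · simp [max_eq_left h]
      have hl : (fun z : ℝ => max z 0) =o[nhds 0] fun _ => (1:ℝ) := by
        rw [Asymptotics.isLittleO_one_iff]
        have : Continuous fun z : ℝ => max z 0 := continuous_id.max continuous_const
        simpa using this.tendsto 0
      simpa [pow_two] using hb.mul_isLittleO hl
    simpa using h1
  · have : (fun y : ℝ => max y 0 ^ 2) =ᶠ[nhds y] fun z => z ^ 2 := by
      filter_upwards [Ioi_mem_nhds h] with z hz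
      simp [max_eq_left (le_of_lt (Set.mem_Ioi.mp hz))]
    rw [max_eq_left h.le]
    have h2 := hasDerivAt_pow 2 y
    norm_num at h2
    exact h2.congr_of_eventuallyEq this

lemma tpow_sq_hasDeriv (c x : ℝ) :
    HasDerivAt (fun y => tpow c y ^ 2) (-2 * tpow c x) x := by
  have h1 := sq_pos_hasDeriv (c - x)
  have h2 : HasDerivAt (fun y : ℝ => c - y) (-1) x := (hasDerivAt_id x).const_sub c
  have := h1.comp x h2
  simpa [tpow, mul_comm, Function.comp_def] using this


lemma rep1 (ξ : ℕ → ℝ) (l : ℕ) (hab : ξ l < ξ (l + 1)) (hbc : ξ (l + 1) < ξ (l + 2)) (x : ℝ) :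
    Bspline ξ l 1 x =
      tpow (ξ l) x / (ξ (l + 1) - ξ l)
        - (1 / (ξ (l + 1) - ξ l) + 1 / (ξ (l + 2) - ξ (l + 1))) * tpow (ξ (l + 1)) x
        + tpow (ξ (l + 2)) x / (ξ (l + 2) - ξ (l + 1)) := by
  have e : Bspline ξ l 1 x =
      ((x - ξ l) / (ξ (l + 1) - ξ l)) *
        Set.indicator (Set.Ioc (ξ l) (ξ (l + 1))) (fun _ => (1:ℝ)) x +
      ((ξ (l + 2) - x) / (ξ (l + 2) - ξ (l + 1))) *
        Set.indicator (Set.Ioc (ξ (l + 1)) (ξ (l + 2))) (fun _ => (1:ℝ)) x := rfl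
  rw [e]
  have h1 : ξ (l + 1) - ξ l ≠ 0 := by linarith
  have h2 : ξ (l + 2) - ξ (l + 1) ≠ 0 := by linarith
  rcases le_or_gt x (ξ l) with hxa | hxa
  · rw [Set.indicator_of_notMem (by simp [Set.mem_Ioc]; intro h; linarith),
      Set.indicator_of_notMem (by simp [Set.mem_Ioc]; intro h; linarith),
      tpow_of_le _ _ hxa, tpow_of_le _ _ (by linarith), tpow_of_le _ _ (by linarith)]
    field_simp
    ring
  · rcases le_or_gt x (ξ (l + 1)) with hxb | hxb
    · rw [Set.indicator_of_mem (Set.mem_Ioc.mpr ⟨hxa, hxb⟩),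
        Set.indicator_of_notMem (by simp [Set.mem_Ioc]; intro h; linarith),
        tpow_nonpos _ _ hxa.le, tpow_of_le _ _ hxb, tpow_of_le _ _ (by linarith)]
      field_simp
      ring
    · rcases le_or_gt x (ξ (l + 2)) with hxc | hxc
      · rw [Set.indicator_of_notMem (by simp [Set.mem_Ioc]; intro h; linarith),
          Set.indicator_of_mem (Set.mem_Ioc.mpr ⟨hxb, hxc⟩),
          tpow_nonpos _ _ (by linarith), tpow_nonpos _ _ hxb.le, tpow_of_le _ _ hxc]
        field_simp
        ring
      · rw [Set.indicator_of_notMem (by simp [Set.mem_Ioc]; intro h; linarith),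
          Set.indicator_of_notMem (by simp [Set.mem_Ioc]; intro h; linarith),
          tpow_nonpos _ _ (by linarith), tpow_nonpos _ _ (by linarith),
          tpow_nonpos _ _ hxc.le]
        simp


set_option maxHeartbeats 800000 in
lemma rep2 (ξ : ℕ → ℝ) (l : ℕ) (hab : ξ l < ξ (l + 1)) (hbc : ξ (l + 1) < ξ (l + 2))
    (hcd : ξ (l + 2) < ξ (l + 3)) (x : ℝ) :
    Bspline ξ l 2 x =
      (-1 / ((ξ (l+1) - ξ l) * (ξ (l+2) - ξ l))) * tpow (ξ l) x ^ 2
      + ((ξ (l+3) - ξ l) / ((ξ (l+1) - ξ l) * (ξ (l+2) - ξ (l+1)) * (ξ (l+3) - ξ (l+1))))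
          * tpow (ξ (l+1)) x ^ 2
      + (-(ξ (l+3) - ξ l) / ((ξ (l+2) - ξ l) * (ξ (l+2) - ξ (l+1)) * (ξ (l+3) - ξ (l+2))))
          * tpow (ξ (l+2)) x ^ 2
      + (1 / ((ξ (l+3) - ξ (l+1)) * (ξ (l+3) - ξ (l+2)))) * tpow (ξ (l+3)) x ^ 2 := by
  have e : Bspline ξ l 2 x =
      ((x - ξ l) / (ξ (l + 2) - ξ l)) * Bspline ξ l 1 x +
      ((ξ (l + 3) - x) / (ξ (l + 3) - ξ (l + 1))) * Bspline ξ (l + 1) 1 x := rfl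
  rw [e, rep1 ξ l hab hbc x, rep1 ξ (l + 1) hbc hcd x]
  simp only [show l + 1 + 1 = l + 2 from rfl, show l + 1 + 2 = l + 3 from rfl]
  rw [← tpow_mul (ξ l) x, ← tpow_mul (ξ (l+1)) x, ← tpow_mul (ξ (l+2)) x, ← tpow_mul (ξ (l+3)) x]
  set a := ξ l
  set b := ξ (l+1)
  set c := ξ (l+2)
  set d := ξ (l+3)
  have h1 : b - a ≠ 0 := by linarith
  have h2 : c - b ≠ 0 := by linarith
  have h3 : d - c ≠ 0 := by linarith
  have h4 : c - a ≠ 0 := by linarith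
  have h5 : d - b ≠ 0 := by linarith
  have hA : (x - a) / (c - a) * (1 / (b - a)) = -1 / ((b - a) * (c - a)) * (a - x) := by
    field_simp
    ring
  have hB : -((x - a) / (c - a)) * (1 / (b - a) + 1 / (c - b)) + (d - x) / (d - b) * (1 / (c - b))
      = (d - a) / ((b - a) * (c - b) * (d - b)) * (b - x) := by
    field_simp
    ring
  have hC : (x - a) / (c - a) * (1 / (c - b)) - (d - x) / (d - b) * (1 / (c - b) + 1 / (d - c))
      = -(d - a) / ((c - a) * (c - b) * (d - c)) * (c - x) := by
    field_simp
    ring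
  have hD : (d - x) / (d - b) * (1 / (d - c)) = 1 / ((d - b) * (d - c)) * (d - x) := by
    field_simp
  linear_combination tpow a x * hA + tpow b x * hB + tpow c x * hC + tpow d x * hD

set_option maxHeartbeats 800000 in
lemma deriv2 (ξ : ℕ → ℝ) (l : ℕ) (hab : ξ l < ξ (l + 1)) (hbc : ξ (l + 1) < ξ (l + 2))
    (hcd : ξ (l + 2) < ξ (l + 3)) (x : ℝ) :
    HasDerivAt (Bspline ξ l 2)
      (2 * (Bspline ξ l 1 x / (ξ (l + 2) - ξ l)
        - Bspline ξ (l + 1) 1 x / (ξ (l + 3) - ξ (l + 1)))) x := by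
  have hfun : Bspline ξ l 2 = fun y =>
      (-1 / ((ξ (l+1) - ξ l) * (ξ (l+2) - ξ l))) * tpow (ξ l) y ^ 2
      + ((ξ (l+3) - ξ l) / ((ξ (l+1) - ξ l) * (ξ (l+2) - ξ (l+1)) * (ξ (l+3) - ξ (l+1))))
          * tpow (ξ (l+1)) y ^ 2
      + (-(ξ (l+3) - ξ l) / ((ξ (l+2) - ξ l) * (ξ (l+2) - ξ (l+1)) * (ξ (l+3) - ξ (l+2))))
          * tpow (ξ (l+2)) y ^ 2
      + (1 / ((ξ (l+3) - ξ (l+1)) * (ξ (l+3) - ξ (l+2)))) * tpow (ξ (l+3)) y ^ 2 :=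
    funext (rep2 ξ l hab hbc hcd)
  rw [hfun]
  have D := ((((tpow_sq_hasDeriv (ξ l) x).const_mul
      (-1 / ((ξ (l+1) - ξ l) * (ξ (l+2) - ξ l)))).add
    ((tpow_sq_hasDeriv (ξ (l+1)) x).const_mul
      ((ξ (l+3) - ξ l) / ((ξ (l+1) - ξ l) * (ξ (l+2) - ξ (l+1)) * (ξ (l+3) - ξ (l+1)))))).add
    ((tpow_sq_hasDeriv (ξ (l+2)) x).const_mul
      (-(ξ (l+3) - ξ l) / ((ξ (l+2) - ξ l) * (ξ (l+2) - ξ (l+1)) * (ξ (l+3) - ξ (l+2)))))).add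
    ((tpow_sq_hasDeriv (ξ (l+3)) x).const_mul
      (1 / ((ξ (l+3) - ξ (l+1)) * (ξ (l+3) - ξ (l+2)))))
  convert D using 1
  · rfl
  · rfl
  · rfl
  rw [rep1 ξ l hab hbc x, rep1 ξ (l + 1) hbc hcd x]
  simp only [show l + 1 + 1 = l + 2 from rfl, show l + 1 + 2 = l + 3 from rfl]
  set a := ξ l
  set b := ξ (l+1)
  set c := ξ (l+2)
  set d := ξ (l+3)
  have h1 : b - a ≠ 0 := by linarith
  have h2 : c - b ≠ 0 := by linarith
  have h3 : d - c ≠ 0 := by linarith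
  have h4 : c - a ≠ 0 := by linarith
  have h5 : d - b ≠ 0 := by linarith
  have cA : 2 * ((1 / (b - a)) / (c - a)) = (-1 / ((b - a) * (c - a))) * (-2) := by
    field_simp
  have cB : 2 * (-((1 / (b - a) + 1 / (c - b))) / (c - a) - (1 / (c - b)) / (d - b))
      = ((d - a) / ((b - a) * (c - b) * (d - b))) * (-2) := by
    field_simp
    ring
  have cC : 2 * ((1 / (c - b)) / (c - a) + (1 / (c - b) + 1 / (d - c)) / (d - b))
      = (-(d - a) / ((c - a) * (c - b) * (d - c))) * (-2) := by
    field_simp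
    ring
  have cD : 2 * (-((1 / (d - c)) / (d - b))) = (1 / ((d - b) * (d - c))) * (-2) := by
    field_simp
  linear_combination tpow a x * cA + tpow b x * cB + tpow c x * cC + tpow d x * cD

lemma xi_mono (ξ : ℕ → ℝ) (n : ℕ) (hξ : ∀ i ≤ n, ξ i < ξ (i + 1)) :
    ∀ j ≤ n + 1, ∀ i < j, ξ i < ξ j := by
  intro j
  induction j with
  | zero => intro _ i hi; omega
  | succ j ih =>
    intro hj i hi
    rcases Nat.lt_succ_iff_lt_or_eq.mp hi with h | h
    · exact (ih (by omega) i h).trans (hξ j (by omega))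
    · subst h; exact hξ i (by omega)

set_option maxHeartbeats 1000000 in
lemma derivAll (ξ : ℕ → ℝ) (n : ℕ) (hξ : ∀ i ≤ n, ξ i < ξ (i + 1)) :
    ∀ m, 1 ≤ m → ∀ l, l + m + 1 ≤ n → ∀ x,
      HasDerivAt (Bspline ξ l (m + 1))
        (((m : ℝ) + 1) * (Bspline ξ l m x / (ξ (l + m + 1) - ξ l)
          - Bspline ξ (l + 1) m x / (ξ (l + m + 2) - ξ (l + 1)))) x := by
  have hmono := xi_mono ξ n hξ
  intro m
  induction m with
  | zero => omega
  | succ m ih =>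
    intro _ l hl x
    rcases Nat.eq_zero_or_pos m with hm | hm
    · subst hm
      have h2 := deriv2 ξ l (hξ l (by omega)) (hξ (l+1) (by omega)) (hξ (l+2) (by omega)) x
      convert h2 using 2 <;> norm_num
    · -- inductive step, order m + 2
      rw [show l + (m + 1) + 1 = l + m + 2 by omega, show l + (m + 1) + 2 = l + m + 3 by omega]
      push_cast
      have hre : Bspline ξ l (m + 2) = fun y =>
          ((y - ξ l) / (ξ (l + m + 2) - ξ l)) * Bspline ξ l (m + 1) y +
          ((ξ (l + m + 3) - y) / (ξ (l + m + 3) - ξ (l + 1))) * Bspline ξ (l + 1) (m + 1) y := by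
        funext y
        rfl
      have IH1 := ih hm l (by omega) x
      have IH2 := ih hm (l + 1) (by omega) x
      rw [show l + 1 + 1 = l + 2 from rfl] at IH2
      rw [show l + 1 + m + 1 = l + m + 2 by omega, show l + 1 + m + 2 = l + m + 3 by omega] at IH2
      have hx1 : HasDerivAt (fun y : ℝ => (y - ξ l) / (ξ (l + m + 2) - ξ l))
          (1 / (ξ (l + m + 2) - ξ l)) x := ((hasDerivAt_id x).sub_const _).div_const _
      have hx2 : HasDerivAt (fun y : ℝ => (ξ (l + m + 3) - y) / (ξ (l + m + 3) - ξ (l + 1)))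
          (-1 / (ξ (l + m + 3) - ξ (l + 1))) x := by
        have := ((hasDerivAt_id x).const_sub (ξ (l + m + 3))).div_const
          (ξ (l + m + 3) - ξ (l + 1))
        simpa using this
      have D := (hx1.mul IH1).add (hx2.mul IH2)
      rw [hre]
      convert D using 1
      · rfl
      · rfl
      · rfl
      have e1 : Bspline ξ l (m + 1) x =
          ((x - ξ l) / (ξ (l + m + 1) - ξ l)) * Bspline ξ l m x +
          ((ξ (l + m + 2) - x) / (ξ (l + m + 2) - ξ (l + 1))) * Bspline ξ (l + 1) m x := rfl
      have e2 : Bspline ξ (l + 1) (m + 1) x =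
          ((x - ξ (l + 1)) / (ξ (l + 1 + m + 1) - ξ (l + 1))) * Bspline ξ (l + 1) m x +
          ((ξ (l + 1 + m + 2) - x) / (ξ (l + 1 + m + 2) - ξ (l + 1 + 1))) *
            Bspline ξ (l + 1 + 1) m x := rfl
      rw [show l + 1 + 1 = l + 2 from rfl, show l + 1 + m + 1 = l + m + 2 by omega,
        show l + 1 + m + 2 = l + m + 3 by omega] at e2
      rw [e1, e2]
      set u := Bspline ξ l m x
      set v := Bspline ξ (l + 1) m x
      set w := Bspline ξ (l + 2) m x
      set A := ξ l
      set B1 := ξ (l + 1)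
      set B2 := ξ (l + 2)
      set C1 := ξ (l + m + 1)
      set C2 := ξ (l + m + 2)
      set C3 := ξ (l + m + 3)
      set k : ℝ := (m : ℝ) + 1 with hk
      have hC1A : C1 - A ≠ 0 := sub_ne_zero.mpr
        (ne_of_gt (hmono (l + m + 1) (by omega) l (by omega)))
      have hC2B1 : C2 - B1 ≠ 0 := sub_ne_zero.mpr
        (ne_of_gt (hmono (l + m + 2) (by omega) (l + 1) (by omega)))
      have hC2A : C2 - A ≠ 0 := sub_ne_zero.mpr
        (ne_of_gt (hmono (l + m + 2) (by omega) l (by omega)))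
      have hC3B1 : C3 - B1 ≠ 0 := sub_ne_zero.mpr
        (ne_of_gt (hmono (l + m + 3) (by omega) (l + 1) (by omega)))
      have hC3B2 : C3 - B2 ≠ 0 := sub_ne_zero.mpr
        (ne_of_gt (hmono (l + m + 3) (by omega) (l + 2) (by omega)))
      have cu : (k + 1) * (((x - A) / (C1 - A)) / (C2 - A)) =
          (1 / (C2 - A)) * ((x - A) / (C1 - A)) + ((x - A) / (C2 - A)) * (k / (C1 - A)) := by
        field_simp
        ring
      have cv : (k + 1) * (((C2 - x) / (C2 - B1)) / (C2 - A) - ((x - B1) / (C2 - B1)) / (C3 - B1))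
          = (1 / (C2 - A)) * ((C2 - x) / (C2 - B1)) + ((x - A) / (C2 - A)) * (-k / (C2 - B1))
            + (-1 / (C3 - B1)) * ((x - B1) / (C2 - B1))
            + ((C3 - x) / (C3 - B1)) * (k / (C2 - B1)) := by
        field_simp
        ring
      have cw : (k + 1) * (-(((C3 - x) / (C3 - B2)) / (C3 - B1))) =
          (-1 / (C3 - B1)) * ((C3 - x) / (C3 - B2))
            + ((C3 - x) / (C3 - B1)) * (-k / (C3 - B2)) := by
        field_simp
        ring
      linear_combination u * cu + v * cv + w * cw

lemma contDiffAll (ξ : ℕ → ℝ) (n : ℕ) (hξ : ∀ i ≤ n, ξ i < ξ (i + 1)) :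
    ∀ m l, l + m + 1 ≤ n → ContDiff ℝ (m : ℕ) (Bspline ξ l (m + 1)) := by
  intro m
  induction m with
  | zero =>
    intro l hl
    have hfun : Bspline ξ l 1 = fun x =>
        tpow (ξ l) x / (ξ (l + 1) - ξ l)
          - (1 / (ξ (l + 1) - ξ l) + 1 / (ξ (l + 2) - ξ (l + 1))) * tpow (ξ (l + 1)) x
          + tpow (ξ (l + 2)) x / (ξ (l + 2) - ξ (l + 1)) :=
      funext (rep1 ξ l (hξ l (by omega)) (hξ (l + 1) (by omega)))
    have hcont : Continuous (Bspline ξ l 1) := by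
      rw [hfun]
      exact (((tpow_continuous _).div_const _).sub
        (continuous_const.mul (tpow_continuous _))).add ((tpow_continuous _).div_const _)
    have h0 : ((0 : ℕ) : WithTop ℕ∞) = 0 := by norm_cast
    rw [h0, contDiff_zero]
    exact hcont
  | succ m ih =>
    intro l hl
    have hd := derivAll ξ n hξ (m + 1) (by omega) l (by omega)
    have hdiff : Differentiable ℝ (Bspline ξ l (m + 1 + 1)) := fun x => (hd x).differentiableAt
    have hderiv : deriv (Bspline ξ l (m + 1 + 1)) = fun x =>
        (((m + 1 : ℕ) : ℝ) + 1) * (Bspline ξ l (m + 1) x / (ξ (l + (m + 1) + 1) - ξ l)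
          - Bspline ξ (l + 1) (m + 1) x / (ξ (l + (m + 1) + 2) - ξ (l + 1))) :=
      funext fun x => (hd x).deriv
    have hcd : ContDiff ℝ (m : ℕ) (deriv (Bspline ξ l (m + 1 + 1))) := by
      rw [hderiv]
      exact contDiff_const.mul (((ih l (by omega)).div_const _).sub
        ((ih (l + 1) (by omega)).div_const _))
    have : ((m + 1 : ℕ) : WithTop ℕ∞) = (m : WithTop ℕ∞) + 1 := by push_cast; rfl
    rw [this, contDiff_succ_iff_deriv]
    exact ⟨hdiff, by simp, hcd⟩

/-- For every order `k` with `1 ≤ k ≤ n` and every `l` with `0 ≤ l ≤ n−k`,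
the B-spline `B_{l,k}` is `(k−1)`-times continuously differentiable on `ℝ`,
i.e. `B_{l,k}` is of class `C^{k−1}` on all of `ℝ`. -/
theorem bspline_contDiff (n : ℕ) (ξ : ℕ → ℝ) (hn : 1 ≤ n)
    (hξ : ∀ i ≤ n, ξ i < ξ (i + 1))
    (k : ℕ) (hk1 : 1 ≤ k) (hkn : k ≤ n)
    (l : ℕ) (hl : l ≤ n - k) :
    ContDiff ℝ (k - 1 : ℕ) (Bspline ξ l k) := by
  obtain ⟨m, rfl⟩ : ∃ m, k = m + 1 := ⟨k - 1, by omega⟩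
  simp only [Nat.add_sub_cancel]
  exact contDiffAll ξ n hξ m l (by omega)
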